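/- Let μ be a locally finite Borel measure on a metric space X and x a point. Then δ̲_μ(x) ≤ d̲_μ(x) ≤ d̄_μ(x) ≤ δ̄_μ(x), where d̲_μ, d̄_μ are the lower/upper local dimensions and δ̲_μ, δ̄_μ the lower/upper tangential dimensions of μ at x. -/

import Mathlib

open Filter MeasureTheory Metric

private lemma tele_ge (m : ℝ → ℝ) (t l M : ℝ) (ht : 0 < t) (hl0 : 0 < l) (hl1 : l < 1)
    (hpos : ∀ s, 0 < s → s ≤ t → 0 < m s)
    (hmono : ∀ a b, 0 < a → a ≤ b → b ≤ t → m a ≤ m b)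
    (hstep : ∀ s, 0 < s → s ≤ t →
      Real.log (m s) - M * Real.log (1 / l) ≤ Real.log (m (l * s))) :
    ∀ n : ℕ, ∀ r : ℝ, l ^ (n + 1) * t < r → r ≤ l ^ n * t →
      Real.log (m (l * t)) - n * (M * Real.log (1 / l)) ≤ Real.log (m r) := by
  intro n
  induction n with
  | zero =>
    intro r h1 h2
    simp only [zero_add, pow_one, pow_zero, one_mul] at h1 h2
    have h0 : 0 < l * t := mul_pos hl0 ht
    have := hmono (l * t) r h0 (le_of_lt h1) h2
    simp only [Nat.cast_zero, zero_mul, sub_zero]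
    exact (Real.log_le_log (hpos _ h0 (by nlinarith)) this)
  | succ n ih =>
    intro r h1 h2
    have hlt : l ^ (n+1) ≤ 1 := pow_le_one₀ hl0.le hl1.le
    have hs0 : 0 < r / l := div_pos (lt_trans (by positivity) h1) hl0
    have hst : r / l ≤ l ^ n * t := by
      rw [div_le_iff₀ hl0]
      calc r ≤ l ^ (n+1) * t := h2
        _ = l ^ n * t * l := by ring
    have h1' : l ^ (n + 1) * t < r / l := by
      rw [lt_div_iff₀ hl0]
      calc l ^ (n+1) * t * l = l ^ (n+2) * t := by ring
        _ < r := h1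
    have ihr := ih (r / l) h1' hst
    have hsle : r / l ≤ t := le_trans hst (by nlinarith [pow_pos hl0 n, pow_le_one₀ hl0.le hl1.le (n := n)])
    have := hstep (r / l) hs0 hsle
    have hrl : l * (r / l) = r := by field_simp
    rw [hrl] at this
    push_cast
    nlinarith

private lemma tele_le (m : ℝ → ℝ) (t l M : ℝ) (ht : 0 < t) (hl0 : 0 < l) (hl1 : l < 1)
    (hpos : ∀ s, 0 < s → s ≤ t → 0 < m s)
    (hmono : ∀ a b, 0 < a → a ≤ b → b ≤ t → m a ≤ m b)
    (hstep : ∀ s, 0 < s → s ≤ t →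
      Real.log (m (l * s)) ≤ Real.log (m s) - M * Real.log (1 / l)) :
    ∀ n : ℕ, ∀ r : ℝ, l ^ (n + 1) * t < r → r ≤ l ^ n * t →
      Real.log (m r) ≤ Real.log (m t) - n * (M * Real.log (1 / l)) := by
  intro n
  induction n with
  | zero =>
    intro r h1 h2
    simp only [zero_add, pow_one, pow_zero, one_mul] at h1 h2
    have h0 : 0 < l * t := mul_pos hl0 ht
    have hr0 : 0 < r := lt_trans h0 h1
    simp only [Nat.cast_zero, zero_mul, sub_zero]
    exact Real.log_le_log (hpos _ hr0 h2) (hmono r t hr0 h2 le_rfl)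
  | succ n ih =>
    intro r h1 h2
    have hs0 : 0 < r / l := div_pos (lt_trans (by positivity) h1) hl0
    have hst : r / l ≤ l ^ n * t := by
      rw [div_le_iff₀ hl0]
      calc r ≤ l ^ (n+1) * t := h2
        _ = l ^ n * t * l := by ring
    have h1' : l ^ (n + 1) * t < r / l := by
      rw [lt_div_iff₀ hl0]
      calc l ^ (n+1) * t * l = l ^ (n+2) * t := by ring
        _ < r := h1
    have ihr := ih (r / l) h1' hst
    have hsle : r / l ≤ t := le_trans hst (by nlinarith [pow_pos hl0 n, pow_le_one₀ hl0.le hl1.le (n := n)])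
    have := hstep (r / l) hs0 hsle
    have hrl : l * (r / l) = r := by field_simp
    rw [hrl] at this
    push_cast
    nlinarith

private lemma find_scale (t l : ℝ) (ht : 0 < t) (hl0 : 0 < l) (hl1 : l < 1) (N : ℕ)
    (r : ℝ) (hr0 : 0 < r) (hrδ : r < l ^ (N + 1) * t) :
    ∃ n : ℕ, N < n ∧ l ^ (n + 1) * t < r ∧ r ≤ l ^ n * t := by
  have hP : ∃ k : ℕ, l ^ (k + 1) * t < r := by
    obtain ⟨k, hk⟩ := exists_pow_lt_of_lt_one (div_pos hr0 ht) hl1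
    refine ⟨k, ?_⟩
    have h1 : l ^ (k + 1) ≤ l ^ k := pow_le_pow_of_le_one hl0.le hl1.le (Nat.le_succ k)
    have h2 : l ^ k * t < r := by rwa [← lt_div_iff₀ ht]
    nlinarith
  classical
  set n1 := Nat.find hP with hn1
  have hspec : l ^ (n1 + 1) * t < r := Nat.find_spec hP
  have hNlt : N < n1 := by
    rw [hn1, Nat.lt_find_iff]
    intro k hk hPk
    have h1 : l ^ (N + 1) ≤ l ^ (k + 1) :=
      pow_le_pow_of_le_one hl0.le hl1.le (by omega)
    nlinarith
  have hn1pos : 1 ≤ n1 := by omega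
  have hmin := Nat.find_min hP (show n1 - 1 < n1 by omega)
  have heq : n1 - 1 + 1 = n1 := by omega
  rw [heq] at hmin
  exact ⟨n1, hNlt, hspec, not_lt.mp hmin⟩

private lemma log_r_le (t l : ℝ) (ht : 0 < t) (hl0 : 0 < l) (n : ℕ) (r : ℝ) (hr0 : 0 < r)
    (h2 : r ≤ l ^ n * t) : Real.log r ≤ Real.log t - n * Real.log (1 / l) := by
  have h := Real.log_le_log hr0 h2
  rw [Real.log_mul (by positivity) ht.ne', Real.log_pow] at h
  have h3 : Real.log (1 / l) = -Real.log l := by rw [one_div, Real.log_inv]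
  rw [h3]; linarith

private lemma log_r_ge (t l : ℝ) (ht : 0 < t) (hl0 : 0 < l) (n : ℕ) (r : ℝ)
    (h1 : l ^ (n + 1) * t < r) : Real.log t - (n + 1) * Real.log (1 / l) ≤ Real.log r := by
  have h := Real.log_le_log (by positivity) h1.le
  rw [Real.log_mul (by positivity) ht.ne', Real.log_pow] at h
  have h3 : Real.log (1 / l) = -Real.log l := by rw [one_div, Real.log_inv]
  rw [h3]; push_cast at h; linarith

private lemma aux_up (m : ℝ → ℝ) (t l M ε : ℝ) (ht : 0 < t) (hl0 : 0 < l) (hl1 : l < 1)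
    (hM : 0 < M) (hε : 0 < ε)
    (hpos : ∀ s, 0 < s → s ≤ t → 0 < m s)
    (hmono : ∀ a b, 0 < a → a ≤ b → b ≤ t → m a ≤ m b)
    (hQ : ∀ s, 0 < s → s ≤ t → Real.log (m s / m (l * s)) / Real.log (1 / l) ≤ M) :
    ∀ᶠ r in nhdsWithin (0:ℝ) (Set.Ioi 0), Real.log (m r) / Real.log r ≤ M + ε := by
  set L := Real.log (1 / l) with hLdef
  have hL : 0 < L := Real.log_pos (one_lt_one_div hl0 hl1)
  set A := Real.log (m (l * t)) with hAdef
  have hstep : ∀ s, 0 < s → s ≤ t →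
      Real.log (m s) - M * L ≤ Real.log (m (l * s)) := by
    intro s hs hst
    have hls0 : 0 < l * s := mul_pos hl0 hs
    have hlst : l * s ≤ t := by nlinarith
    have h1 := (div_le_iff₀ hL).mp (hQ s hs hst)
    rw [Real.log_div (hpos s hs hst).ne' (hpos _ hls0 hlst).ne'] at h1
    linarith
  obtain ⟨n0, hn0⟩ := exists_nat_ge (((M + ε) * |Real.log t| + |A|) / (ε * L))
  obtain ⟨n2, hn2⟩ := exists_pow_lt_of_lt_one (show (0:ℝ) < 1 / t by positivity) hl1
  set N := max n0 n2 with hNdef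
  have hδpos : 0 < l ^ (N + 1) * t := by positivity
  filter_upwards [Ioo_mem_nhdsGT_of_mem (show (0:ℝ) ∈ Set.Ico 0 (l ^ (N + 1) * t) from ⟨le_refl _, hδpos⟩)] with r hr
  obtain ⟨hr0, hrδ⟩ := hr
  obtain ⟨n, hNn, h1, h2⟩ := find_scale t l ht hl0 hl1 N r hr0 hrδ
  have hr1 : r < 1 := by
    have hp : l ^ (N + 1) ≤ l ^ n2 := pow_le_pow_of_le_one hl0.le hl1.le (le_trans (le_max_right _ _) (Nat.le_succ _))
    have : l ^ n2 * t < 1 := (lt_div_iff₀ ht).mp hn2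
    nlinarith
  have hlogr : Real.log r < 0 := Real.log_neg hr0 hr1
  have hlogr_le : Real.log r ≤ Real.log t - n * L := log_r_le t l ht hl0 n r hr0 h2
  have htele := tele_ge m t l M ht hl0 hl1 hpos hmono hstep n r h1 h2
  rw [div_le_iff_of_neg hlogr]
  have hc1 : (M + ε) * Real.log r ≤ (M + ε) * (Real.log t - n * L) :=
    mul_le_mul_of_nonneg_left hlogr_le (by linarith)
  have hcast : ((n0 : ℝ)) ≤ (n : ℝ) := by
    have : n0 ≤ n := le_trans (le_max_left _ _) hNn.le
    exact_mod_cast this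
  have hmul : ((M + ε) * |Real.log t| + |A|) ≤ (n0 : ℝ) * (ε * L) := by
    rw [div_le_iff₀ (by positivity)] at hn0
    linarith
  nlinarith [le_abs_self (Real.log t), neg_abs_le A, mul_le_mul_of_nonneg_right hcast (le_of_lt (mul_pos hε hL))]

set_option maxHeartbeats 1000000 in
private lemma aux_low (m : ℝ → ℝ) (t l M ε : ℝ) (ht : 0 < t) (hl0 : 0 < l) (hl1 : l < 1)
    (hM : 0 ≤ M) (hε : 0 < ε)
    (hpos : ∀ s, 0 < s → s ≤ t → 0 < m s)
    (hmono : ∀ a b, 0 < a → a ≤ b → b ≤ t → m a ≤ m b)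
    (hQ : ∀ s, 0 < s → s ≤ t → M ≤ Real.log (m s / m (l * s)) / Real.log (1 / l)) :
    ∀ᶠ r in nhdsWithin (0:ℝ) (Set.Ioi 0), M - ε ≤ Real.log (m r) / Real.log r := by
  set L := Real.log (1 / l) with hLdef
  have hL : 0 < L := Real.log_pos (one_lt_one_div hl0 hl1)
  set B := Real.log (m t) with hBdef
  have hstep : ∀ s, 0 < s → s ≤ t →
      Real.log (m (l * s)) ≤ Real.log (m s) - M * L := by
    intro s hs hst
    have hls0 : 0 < l * s := mul_pos hl0 hs
    have hlst : l * s ≤ t := by nlinarith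
    have h1 := (le_div_iff₀ hL).mp (hQ s hs hst)
    rw [Real.log_div (hpos s hs hst).ne' (hpos _ hls0 hlst).ne'] at h1
    linarith
  obtain ⟨n0, hn0⟩ := exists_nat_ge ((|B| + (M + ε) * |Real.log t| + (M + ε) * L) / (ε * L))
  obtain ⟨n2, hn2⟩ := exists_pow_lt_of_lt_one (show (0:ℝ) < 1 / t by positivity) hl1
  set N := max n0 n2 with hNdef
  have hδpos : 0 < l ^ (N + 1) * t := by positivity
  filter_upwards [Ioo_mem_nhdsGT_of_mem (show (0:ℝ) ∈ Set.Ico 0 (l ^ (N + 1) * t) from ⟨le_refl _, hδpos⟩)] with r hr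
  obtain ⟨hr0, hrδ⟩ := hr
  obtain ⟨n, hNn, h1, h2⟩ := find_scale t l ht hl0 hl1 N r hr0 hrδ
  have hr1 : r < 1 := by
    have hp : l ^ (N + 1) ≤ l ^ n2 := pow_le_pow_of_le_one hl0.le hl1.le (le_trans (le_max_right _ _) (Nat.le_succ _))
    have h3 : l ^ n2 * t < 1 := (lt_div_iff₀ ht).mp hn2
    nlinarith
  have hlogr : Real.log r < 0 := Real.log_neg hr0 hr1
  have hlogr_le : Real.log r ≤ Real.log t - n * L := log_r_le t l ht hl0 n r hr0 h2
  have hlogr_ge : Real.log t - (n + 1) * L ≤ Real.log r := log_r_ge t l ht hl0 n r h1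
  have htele := tele_le m t l M ht hl0 hl1 hpos hmono hstep n r h1 h2
  rw [le_div_iff_of_neg hlogr]
  have hcast : ((n0 : ℝ)) ≤ (n : ℝ) := by
    have : n0 ≤ n := le_trans (le_max_left _ _) hNn.le
    exact_mod_cast this
  have hmul : (|B| + (M + ε) * |Real.log t| + (M + ε) * L) ≤ (n0 : ℝ) * (ε * L) := by
    rw [div_le_iff₀ (by positivity)] at hn0
    linarith
  have hmul' : (|B| + (M + ε) * |Real.log t| + (M + ε) * L) ≤ (n : ℝ) * (ε * L) :=
    le_trans hmul (mul_le_mul_of_nonneg_right hcast (by positivity))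
  have habs1 : -((M - ε) * Real.log t) ≤ (M + ε) * |Real.log t| := by
    nlinarith [le_abs_self (Real.log t), neg_abs_le (Real.log t), abs_nonneg (Real.log t), hM, hε]
  have e1 : B - (M - ε) * Real.log t + (M - ε) * L ≤ (n : ℝ) * (ε * L) := by
    have h4 : (0:ℝ) ≤ ε * L := mul_nonneg hε.le hL.le
    linarith [hmul', le_abs_self B, habs1]
  rcases le_or_gt 0 (M - ε) with hc | hc
  · have key : (M - ε) * (Real.log t - ((n : ℝ) + 1) * L) ≤ (M - ε) * Real.log r :=
      mul_le_mul_of_nonneg_left hlogr_ge hc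
    have e2 : B - (n : ℝ) * (M * L) ≤ (M - ε) * (Real.log t - ((n : ℝ) + 1) * L) := by
      linarith [e1]
    linarith [htele, key, e2]
  · have key : (M - ε) * (Real.log t - (n : ℝ) * L) ≤ (M - ε) * Real.log r := by
      have := mul_le_mul_of_nonpos_left hlogr_le hc.le
      linarith [this]
    have e1' : B - (M - ε) * Real.log t ≤ (n : ℝ) * (ε * L) := by
      have h5 : (0:ℝ) ≤ (M + ε) * L := mul_nonneg (by linarith) hL.le
      linarith [hmul', le_abs_self B, habs1]
    have e2 : B - (n : ℝ) * (M * L) ≤ (M - ε) * (Real.log t - (n : ℝ) * L) := by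
      linarith [e1']
    linarith [htele, key, e2]

private lemma extract (t₀ : ℝ) (ht₀ : 0 < t₀) {p : ℝ → Prop}
    (h : ∀ᶠ r in nhdsWithin (0:ℝ) (Set.Ioi 0), p r) :
    ∃ t, 0 < t ∧ t ≤ t₀ ∧ ∀ s, 0 < s → s ≤ t → p s := by
  obtain ⟨u, hu, hsub⟩ := mem_nhdsGT_iff_exists_Ioc_subset.mp h
  exact ⟨min u t₀, lt_min hu ht₀, min_le_right _ _,
    fun s hs hst => hsub ⟨hs, le_trans hst (min_le_left _ _)⟩⟩

/-- For a locally finite Borel measure `μ` on a metric space and a point `x`,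
the tangential and local dimensions satisfy
`δ̲_μ(x) ≤ d̲_μ(x) ≤ d̄_μ(x) ≤ δ̄_μ(x)` (as extended reals). -/
theorem stmt9 {X : Type*} [MetricSpace X] [MeasurableSpace X] [BorelSpace X]
    (μ : Measure X) [IsLocallyFiniteMeasure μ] (x : X) :
    let m : ℝ → ℝ := fun r => (μ (ball x r)).toReal
    let dlow : EReal := liminf (fun r : ℝ => ((Real.log (m r) / Real.log r : ℝ) : EReal))
      (nhdsWithin 0 (Set.Ioi 0))
    let dup : EReal := limsup (fun r : ℝ => ((Real.log (m r) / Real.log r : ℝ) : EReal))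
      (nhdsWithin 0 (Set.Ioi 0))
    let δlow : EReal := liminf (fun l : ℝ =>
      liminf (fun r : ℝ => ((Real.log (m r / m (l * r)) / Real.log (1 / l) : ℝ) : EReal))
        (nhdsWithin 0 (Set.Ioi 0))) (nhdsWithin 0 (Set.Ioi 0))
    let δup : EReal := limsup (fun l : ℝ =>
      limsup (fun r : ℝ => ((Real.log (m r / m (l * r)) / Real.log (1 / l) : ℝ) : EReal))
        (nhdsWithin 0 (Set.Ioi 0))) (nhdsWithin 0 (Set.Ioi 0))
    δlow ≤ dlow ∧ dlow ≤ dup ∧ dup ≤ δup := by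
  intro m dlow dup δlow δup
  classical
  have hmid : dlow ≤ dup := liminf_le_limsup
  by_cases hdeg : ∃ s, 0 < s ∧ μ (ball x s) = 0
  · -- degenerate case : the measure vanishes near x
    obtain ⟨s, hs0, hμs⟩ := hdeg
    have hm0 : ∀ r, 0 < r → r ≤ s → m r = 0 := by
      intro r _ h2
      have : μ (ball x r) = 0 :=
        le_antisymm (hμs ▸ measure_mono (ball_subset_ball h2)) zero_le
      simp [m, this]
    have hq : ∀ᶠ r in nhdsWithin (0:ℝ) (Set.Ioi 0),
        ((Real.log (m r) / Real.log r : ℝ) : EReal) = (0:EReal) := by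
      filter_upwards [Ioc_mem_nhdsGT_of_mem (Set.mem_Ico.mpr ⟨le_refl (0:ℝ), hs0⟩)] with r hr
      rw [hm0 r hr.1 hr.2, Real.log_zero, zero_div, EReal.coe_zero]
    have hdl : dlow = (0:EReal) :=
      (liminf_congr hq).trans (liminf_const _)
    have hdu : dup = (0:EReal) :=
      (limsup_congr hq).trans (limsup_const _)
    have hQ0 : ∀ l : ℝ, ∀ᶠ r in nhdsWithin (0:ℝ) (Set.Ioi 0),
        ((Real.log (m r / m (l * r)) / Real.log (1 / l) : ℝ) : EReal) = (0:EReal) := by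
      intro l
      filter_upwards [Ioc_mem_nhdsGT_of_mem (Set.mem_Ico.mpr ⟨le_refl (0:ℝ), hs0⟩)] with r hr
      rw [hm0 r hr.1 hr.2, zero_div, Real.log_zero, zero_div, EReal.coe_zero]
    have hδl : δlow = (0:EReal) := by
      have : ∀ l : ℝ, liminf (fun r : ℝ =>
          ((Real.log (m r / m (l * r)) / Real.log (1 / l) : ℝ) : EReal))
          (nhdsWithin 0 (Set.Ioi 0)) = (0:EReal) :=
        fun l => (liminf_congr (hQ0 l)).trans (liminf_const _)
      calc δlow = liminf (fun _ : ℝ => (0:EReal)) (nhdsWithin 0 (Set.Ioi 0)) :=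
            liminf_congr (Filter.Eventually.of_forall this)
        _ = 0 := liminf_const _
    have hδu : δup = (0:EReal) := by
      have : ∀ l : ℝ, limsup (fun r : ℝ =>
          ((Real.log (m r / m (l * r)) / Real.log (1 / l) : ℝ) : EReal))
          (nhdsWithin 0 (Set.Ioi 0)) = (0:EReal) :=
        fun l => (limsup_congr (hQ0 l)).trans (limsup_const _)
      calc δup = limsup (fun _ : ℝ => (0:EReal)) (nhdsWithin 0 (Set.Ioi 0)) :=
            limsup_congr (Filter.Eventually.of_forall this)
        _ = 0 := limsup_const _
    exact ⟨hδl ▸ hdl ▸ le_refl _, hmid, hdu ▸ hδu ▸ le_refl _⟩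
  · push_neg at hdeg
    -- a radius where the measure is finite
    obtain ⟨U, hUx, hUfin⟩ := μ.finiteAt_nhds x
    obtain ⟨t₀, ht₀, hball⟩ := Metric.mem_nhds_iff.mp hUx
    have hfin : ∀ s : ℝ, s ≤ t₀ → μ (ball x s) ≠ ⊤ := by
      intro s hst
      exact ne_top_of_le_ne_top hUfin.ne
        (measure_mono (Set.Subset.trans (ball_subset_ball hst) hball))
    have hpos : ∀ s, 0 < s → s ≤ t₀ → 0 < m s := by
      intro s hs hst
      exact ENNReal.toReal_pos (hdeg s hs) (hfin s hst)
    have hmono : ∀ a b, 0 < a → a ≤ b → b ≤ t₀ → m a ≤ m b := by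
      intro a b _ hab hbt
      exact ENNReal.toReal_mono (hfin b hbt) (measure_mono (ball_subset_ball hab))
    -- pointwise nonnegativity of the tangential quotient
    have hQnn : ∀ l : ℝ, 0 < l → l < 1 → ∀ r, 0 < r → r ≤ t₀ →
        0 ≤ Real.log (m r / m (l * r)) / Real.log (1 / l) := by
      intro l hl0 hl1 r hr hrt
      have hlr0 : 0 < l * r := mul_pos hl0 hr
      have hlrt : l * r ≤ t₀ := by nlinarith
      refine div_nonneg (Real.log_nonneg ?_) (Real.log_nonneg (by
        rw [le_one_div (by norm_num) hl0]; simpa using hl1.le))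
      rw [le_div_iff₀ (hpos _ hlr0 hlrt)]
      simpa using hmono (l * r) r hlr0 (by nlinarith) hrt
    constructor
    · -- δlow ≤ dlow
      have key : ∀ᶠ l in nhdsWithin (0:ℝ) (Set.Ioi 0),
          liminf (fun r : ℝ =>
            ((Real.log (m r / m (l * r)) / Real.log (1 / l) : ℝ) : EReal))
            (nhdsWithin 0 (Set.Ioi 0)) ≤ dlow := by
        filter_upwards [Ioo_mem_nhdsGT_of_mem (Set.mem_Ico.mpr ⟨le_refl (0:ℝ), one_pos⟩)]
          with l hl
        obtain ⟨hl0, hl1⟩ := hl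
        refine EReal.ge_of_forall_gt_iff_ge.mp ?_
        intro c hc
        have hev : ∀ᶠ r in nhdsWithin (0:ℝ) (Set.Ioi 0),
            (c : EReal) < ((Real.log (m r / m (l * r)) / Real.log (1 / l) : ℝ) : EReal) :=
          eventually_lt_of_lt_liminf hc
        have hev2 : ∀ᶠ r in nhdsWithin (0:ℝ) (Set.Ioi 0),
            c < Real.log (m r / m (l * r)) / Real.log (1 / l) := by
          filter_upwards [hev] with r hr
          exact_mod_cast hr
        obtain ⟨t, ht, htt₀, hQ⟩ := extract t₀ ht₀ hev2
        set M := max c 0 with hMdef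
        have hQM : ∀ s, 0 < s → s ≤ t → M ≤ Real.log (m s / m (l * s)) / Real.log (1 / l) := by
          intro s hs hst
          exact max_le (hQ s hs hst).le (hQnn l hl0 hl1 s hs (le_trans hst htt₀))
        have hdlowM : ∀ ε : ℝ, 0 < ε → ((M - ε : ℝ) : EReal) ≤ dlow := by
          intro ε hε
          have := aux_low m t l M ε ht hl0 hl1 (le_max_right _ _) hε
            (fun s hs hst => hpos s hs (le_trans hst htt₀))
            (fun a b ha hab hbt => hmono a b ha hab (le_trans hbt htt₀)) hQM
          refine le_liminf_of_le (by isBoundedDefault) ?_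
          filter_upwards [this] with r hr
          exact_mod_cast hr
        have hMle : ((M : ℝ) : EReal) ≤ dlow := by
          refine EReal.ge_of_forall_gt_iff_ge.mp ?_
          intro z hz
          have hz' : z < M := by exact_mod_cast hz
          have := hdlowM (M - z) (by linarith)
          simpa using this
        exact le_trans (by exact_mod_cast (le_max_left c 0)) hMle
      exact liminf_le_of_frequently_le' key.frequently
    refine ⟨hmid, ?_⟩
    · -- dup ≤ δup
      have key : ∀ᶠ l in nhdsWithin (0:ℝ) (Set.Ioi 0),
          dup ≤ limsup (fun r : ℝ =>
            ((Real.log (m r / m (l * r)) / Real.log (1 / l) : ℝ) : EReal))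
            (nhdsWithin 0 (Set.Ioi 0)) := by
        filter_upwards [Ioo_mem_nhdsGT_of_mem (Set.mem_Ico.mpr ⟨le_refl (0:ℝ), one_pos⟩)]
          with l hl
        obtain ⟨hl0, hl1⟩ := hl
        have hU0 : (0:EReal) ≤ limsup (fun r : ℝ =>
            ((Real.log (m r / m (l * r)) / Real.log (1 / l) : ℝ) : EReal))
            (nhdsWithin 0 (Set.Ioi 0)) := by
          refine le_limsup_of_frequently_le' ?_
          refine Filter.Eventually.frequently ?_
          filter_upwards [Ioc_mem_nhdsGT_of_mem (Set.mem_Ico.mpr ⟨le_refl (0:ℝ), ht₀⟩)]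
            with r hr
          have := hQnn l hl0 hl1 r hr.1 hr.2
          exact_mod_cast this
        refine EReal.le_of_forall_lt_iff_le.mp ?_
        intro M hM
        have hM0 : 0 < M := by
          have := lt_of_le_of_lt hU0 hM
          exact_mod_cast this
        have hev : ∀ᶠ r in nhdsWithin (0:ℝ) (Set.Ioi 0),
            Real.log (m r / m (l * r)) / Real.log (1 / l) < M := by
          have := eventually_lt_of_limsup_lt hM
          filter_upwards [this] with r hr
          exact_mod_cast hr
        obtain ⟨t, ht, htt₀, hQ⟩ := extract t₀ ht₀ hev
        refine EReal.le_of_forall_lt_iff_le.mp ?_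
        intro z hz
        have hz' : M < z := by exact_mod_cast hz
        have := aux_up m t l M (z - M) ht hl0 hl1 hM0 (by linarith)
          (fun s hs hst => hpos s hs (le_trans hst htt₀))
          (fun a b ha hab hbt => hmono a b ha hab (le_trans hbt htt₀))
          (fun s hs hst => (hQ s hs hst).le)
        refine limsup_le_of_le (by isBoundedDefault) ?_
        filter_upwards [this] with r hr
        have : Real.log (m r) / Real.log r ≤ z := by linarith
        exact_mod_cast this
      exact le_limsup_of_frequently_le' key.frequently
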